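/- Let C(u_1), …, C(u_λ) be pairwise disjoint finite clusters and G_c a graph with edges only between consecutive clusters (path structure). Perform forward propagation marking active cells as in the path algorithm, then delete all non-active cells, then perform backward propagation from C(u_λ) to C(u_1) on the remaining graph and delete all cells not active in the backward pass. Then a cell a ∈ C(u_i) survives both passes if and only if there exists a skeleton of G_c (a transversal with consecutive chosen cells adjacent) containing a. -/

import Mathlib

section
variable {ι : Type*} {n : ℕ} (cl : ι → Fin (n + 1)) (adj : ι → ι → Prop)
  (fwd bwd : ι → Prop)

lemma head_chain
    (hfwd : ∀ a, fwd a ↔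
      ((cl a).val = 0 ∨ ∃ b, adj b a ∧ (cl b).val + 1 = (cl a).val ∧ fwd b)) :
    ∀ k : ℕ, ∀ a : ι, (cl a).val = k → fwd a →
      ∃ s : Fin (n + 1) → ι, (∀ i : Fin (n+1), i.val ≤ k → cl (s i) = i) ∧
        s (cl a) = a ∧ ∀ i : Fin n, i.val + 1 ≤ k → adj (s i.castSucc) (s i.succ) := by
  intro k
  induction k using Nat.strong_induction_on with
  | _ k ih =>
    intro a hk hf
    rcases (hfwd a).1 hf with h0 | ⟨b, hab, hcb, hfb⟩
    · refine ⟨fun _ => a, ?_, rfl, ?_⟩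
      · intro i hi
        have : (cl a).val = i.val := by omega
        exact Fin.ext this
      · intro i hi; omega
    · obtain ⟨s, hs1, hs2, hs3⟩ := ih (cl b).val (by omega) b rfl hfb
      refine ⟨fun i => if i = cl a then a else s i, ?_, ?_, ?_⟩
      · intro i hi
        by_cases hic : i = cl a
        · simp [hic]
        · have : i.val ≠ k := fun h => hic (Fin.ext (by omega))
          simp only [hic, if_neg]
          exact hs1 i (by omega)
      · simp
      · intro i hi
        by_cases hic : i.succ = cl a
        · have hcs : i.castSucc ≠ cl a := by
            intro h
            have := congrArg Fin.val h
            have := congrArg Fin.val hic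
            simp [Fin.val_succ] at *; omega
          have hcsb : i.castSucc = cl b := by
            apply Fin.ext
            have := congrArg Fin.val hic
            simp [Fin.val_succ] at this
            simp [Fin.coe_castSucc]; omega
          simp only [hic, if_pos, hcs, if_neg, not_false_iff]
          rw [hcsb, hs2]; exact hab
        · have hiv : i.val + 1 ≠ k := by
            intro h; exact hic (Fin.ext (by simp [Fin.val_succ]; omega))
          have hcs : i.castSucc ≠ cl a := by
            intro h; have := congrArg Fin.val h; simp at this; omega
          simp only [hic, hcs, if_neg, not_false_iff]
          exact hs3 i (by omega)

lemma tail_chain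
    (hbwd : ∀ a, bwd a ↔ (fwd a ∧
      ((cl a).val = n ∨ ∃ b, adj a b ∧ (cl b).val = (cl a).val + 1 ∧ bwd b))) :
    ∀ k : ℕ, ∀ a : ι, n - (cl a).val = k → bwd a →
      ∃ t : Fin (n + 1) → ι, (∀ i : Fin (n+1), (cl a).val ≤ i.val → cl (t i) = i) ∧
        t (cl a) = a ∧ ∀ i : Fin n, (cl a).val ≤ i.val → adj (t i.castSucc) (t i.succ) := by
  intro k
  induction k using Nat.strong_induction_on with
  | _ k ih =>
    intro a hk hb
    rcases (hbwd a).1 hb with ⟨hf, hn | ⟨b, hab, hcb, hbb⟩⟩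
    · refine ⟨fun _ => a, ?_, rfl, ?_⟩
      · intro i hi
        have hlt := i.isLt
        have : (cl a).val = i.val := by omega
        exact Fin.ext this
      · intro i hi
        have := i.isLt; omega
    · have hbn : (cl b).val ≤ n := by omega
      obtain ⟨t, ht1, ht2, ht3⟩ := ih (n - (cl b).val) (by omega) b rfl hbb
      refine ⟨fun i => if i = cl a then a else t i, ?_, ?_, ?_⟩
      · intro i hi
        by_cases hic : i = cl a
        · simp [hic]
        · have : i.val ≠ (cl a).val := fun h => hic (Fin.ext (by omega))
          simp only [hic, if_neg, not_false_iff]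
          exact ht1 i (by omega)
      · simp
      · intro i hi
        by_cases hic : i.castSucc = cl a
        · have hsc : i.succ ≠ cl a := by
            intro h
            have := congrArg Fin.val h
            have := congrArg Fin.val hic
            simp at *; omega
          have hscb : i.succ = cl b := by
            apply Fin.ext
            have := congrArg Fin.val hic
            simp at this ⊢; omega
          simp only [hic, if_pos, hsc, if_neg, not_false_iff]
          rw [hscb, ht2]; exact hab
        · have hiv : i.val ≠ (cl a).val := by
            intro h; exact hic (Fin.ext (by simp; omega))
          have hsc : i.succ ≠ cl a := by
            intro h; have := congrArg Fin.val h; simp at this; omega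
          simp only [hic, hsc, if_neg, not_false_iff]
          exact ht3 i (by omega)

end

/-- Forward/backward propagation on a path of clusters. Clusters
`C(u_1), …, C(u_λ)` (here `λ = n + 1`) are modelled by a cell type `ι` with cluster
map `cl : ι → Fin (n+1)`; the cell graph `adj` is symmetric and joins only cells of
consecutive clusters. `fwd` is the forward-propagation activity predicate (all cells
of the first cluster are active; a cell of a later cluster is active iff adjacent to
an active cell of the previous cluster). `bwd` is the backward-propagation activity
predicate computed on the graph with the non-`fwd` cells deleted (all remaining
cells of the last cluster are active; a remaining cell is active iff adjacent to an
active remaining cell of the next cluster). Then a cell `a` survives both passes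
(i.e., satisfies `bwd`) iff there is a skeleton of `G_c` containing `a`. -/
theorem survives_both_passes_iff_in_skeleton
    {ι : Type*} {n : ℕ} (cl : ι → Fin (n + 1)) (adj : ι → ι → Prop)
    (hsymm : ∀ a b, adj a b → adj b a)
    (hconsec : ∀ a b, adj a b → (cl b).val = (cl a).val + 1 ∨ (cl a).val = (cl b).val + 1)
    (fwd bwd : ι → Prop)
    (hfwd : ∀ a, fwd a ↔
      ((cl a).val = 0 ∨ ∃ b, adj b a ∧ (cl b).val + 1 = (cl a).val ∧ fwd b))
    (hbwd : ∀ a, bwd a ↔ (fwd a ∧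
      ((cl a).val = n ∨ ∃ b, adj a b ∧ (cl b).val = (cl a).val + 1 ∧ bwd b))) :
    ∀ a : ι, bwd a ↔
      (∃ s : Fin (n + 1) → ι, (∀ i, cl (s i) = i) ∧ s (cl a) = a ∧
        ∀ i : Fin n, adj (s i.castSucc) (s i.succ)) := by
  intro a
  constructor
  · intro hb
    have hf : fwd a := ((hbwd a).1 hb).1
    obtain ⟨s, hs1, hs2, hs3⟩ := head_chain cl adj fwd hfwd (cl a).val a rfl hf
    obtain ⟨t, ht1, ht2, ht3⟩ := tail_chain cl adj fwd bwd hbwd (n - (cl a).val) a rfl hb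
    refine ⟨fun i => if i.val ≤ (cl a).val then s i else t i, ?_, ?_, ?_⟩
    · intro i
      by_cases hi : i.val ≤ (cl a).val
      · simp only [hi, if_pos]; exact hs1 i hi
      · simp only [hi, if_neg, not_false_iff]; exact ht1 i (by omega)
    · simp [hs2]
    · intro i
      by_cases hi : i.val + 1 ≤ (cl a).val
      · have h1 : i.castSucc.val ≤ (cl a).val := by simp; omega
        have h2 : i.succ.val ≤ (cl a).val := by simp; omega
        simp only [h1, h2, if_pos]
        exact hs3 i hi
      · have hge : (cl a).val ≤ i.val := by omega
        have h2 : ¬ i.succ.val ≤ (cl a).val := by simp; omega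
        have key : (if i.castSucc.val ≤ (cl a).val then s i.castSucc else t i.castSucc)
            = t i.castSucc := by
          by_cases h1 : i.castSucc.val ≤ (cl a).val
          · have : i.castSucc = cl a := Fin.ext (by simp at h1 ⊢; omega)
            rw [this, hs2, ht2]; simp
          · simp only [h1, if_neg, not_false_iff]
        simp only [h2, if_neg, not_false_iff, key]
        exact ht3 i hge
  · rintro ⟨s, hs1, hs2, hs3⟩
    have hfs : ∀ k : ℕ, ∀ hk : k ≤ n, fwd (s ⟨k, by omega⟩) := by
      intro k
      induction k with
      | zero => intro hk; exact (hfwd _).2 (Or.inl (by rw [hs1]))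
      | succ m ih =>
        intro hk
        refine (hfwd _).2 (Or.inr ⟨s ⟨m, by omega⟩, ?_, ?_, ih (by omega)⟩)
        · have := hs3 ⟨m, by omega⟩
          simpa [Fin.castSucc, Fin.succ] using this
        · rw [hs1, hs1]
    have hbs : ∀ k : ℕ, ∀ hk : k ≤ n, bwd (s ⟨n - k, by omega⟩) := by
      intro k
      induction k with
      | zero =>
        intro hk
        exact (hbwd _).2 ⟨hfs n (le_refl n), Or.inl (by rw [hs1]; simp)⟩
      | succ m ih =>
        intro hk
        refine (hbwd _).2 ⟨hfs _ (by omega), Or.inr ⟨s ⟨n - m, by omega⟩, ?_, ?_, ih (by omega)⟩⟩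
        · have := hs3 ⟨n - (m+1), by omega⟩
          have he : (⟨n - (m+1), by omega⟩ : Fin n).succ = (⟨n - m, by omega⟩ : Fin (n+1)) :=
            Fin.ext (by simp [Fin.val_succ]; omega)
          rw [he] at this
          convert this using 2
          rfl
        · rw [hs1, hs1]; simp; omega
    have := hbs (n - (cl a).val) (by omega)
    have he : (⟨n - (n - (cl a).val), by omega⟩ : Fin (n+1)) = cl a :=
      Fin.ext (by simp; omega)
    rw [he, hs2] at this
    exact this
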